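/- arXiv:0709.3735 — 3 statements merged into one kernel-verified Lean document; each statement's English description precedes it below -/
import Mathlib

section
/- Let k be a field and X a set. The k-algebra homomorphisms from the product algebra ∏_{x ∈ X} k to a commutative k-algebra B, which factor through the projection onto a finite subproduct, are in natural bijection with continuous maps from Spec B (with Zariski topology) to X (with discrete topology). -/
open PrimeSpectrum Finset

namespace AHPAux

variable {k X B : Type} [Field k] [CommRing B] [Algebra k B] [DecidableEq X]

noncomputable def sg (x : X) : X → k := Pi.single x 1

lemma idem_nilp_zero {e : B} (he : IsIdempotentElem e) (hn : IsNilpotent e) : e = 0 := by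
  obtain ⟨n, hn⟩ := hn
  calc e = e ^ (n + 1) := (he.pow_succ_eq n).symm
  _ = e ^ n * e := pow_succ e n
  _ = 0 := by rw [hn, zero_mul]

lemma idem_eq_of_basicOpen_eq {e f : B} (he : IsIdempotentElem e) (hf : IsIdempotentElem f)
    (h : (basicOpen e : Set (PrimeSpectrum B)) = basicOpen f) : e = f :=
  basicOpen_injOn_isIdempotentElem he hf (TopologicalSpace.Opens.ext h)

lemma sg_mul_ne {x y : X} (h : x ≠ y) : (sg x : X → k) * sg y = 0 := by
  funext z
  simp only [sg, Pi.mul_apply, Pi.single_apply, Pi.zero_apply]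
  rcases eq_or_ne z x with rfl | hz
  · simp [h]
  · simp [hz]

lemma sg_idem (x : X) : IsIdempotentElem (sg x : X → k) := by
  funext z
  simp only [sg, Pi.mul_apply, Pi.single_apply]
  split <;> simp

lemma smul_sg (g : X → k) (x : X) : g x • (sg x : X → k) = Pi.single x (g x) := by
  funext z
  simp [sg, Pi.single_apply, Pi.smul_apply, smul_eq_mul, mul_ite]

section Forward

variable (f : (X → k) →ₐ[k] B)

lemma sum_sg_eq (Y : Finset X) (g : X → k) {y : X} (hy : y ∈ Y) :
    (∑ x ∈ Y, (Pi.single x (g x) : X → k)) y = g y := by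
  rw [Finset.sum_apply]
  simp only [Pi.single_apply]
  rw [Finset.sum_ite_eq Y y g, if_pos hy]

lemma f_eq_sum (Y : Finset X) (hY : ∀ g h : X → k, (∀ x ∈ Y, g x = h x) → f g = f h)
    (g : X → k) : f g = ∑ x ∈ Y, g x • f (sg x) := by
  have h1 : f g = f (∑ x ∈ Y, (Pi.single x (g x) : X → k)) :=
    hY _ _ fun x hx => (sum_sg_eq Y g hx).symm
  rw [h1, map_sum]
  refine Finset.sum_congr rfl fun x _ => ?_
  rw [← smul_sg, map_smul]

lemma exu (Y : Finset X) (hY : ∀ g h : X → k, (∀ x ∈ Y, g x = h x) → f g = f h)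
    (p : PrimeSpectrum B) : ∃! x : X, f (sg x) ∉ p.asIdeal := by
  have hone : (∑ x ∈ Y, f (sg x)) = 1 := by
    rw [← map_sum]
    have : f (∑ x ∈ Y, (sg x : X → k)) = f 1 := by
      refine hY _ _ fun y hy => ?_
      have := sum_sg_eq (k := k) Y (fun _ => 1) hy
      simpa [sg] using this
    rw [this, map_one]
  have hex : ∃ x, f (sg x) ∉ p.asIdeal := by
    by_contra h
    push_neg at h
    have : (1 : B) ∈ p.asIdeal := by
      rw [← hone]; exact Ideal.sum_mem _ fun x _ => h x
    exact (Ideal.ne_top_iff_one _).mp p.2.ne_top this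
  obtain ⟨x, hx⟩ := hex
  refine ⟨x, hx, fun y hy => ?_⟩
  by_contra hne
  have : f (sg y) * f (sg x) = 0 := by
    rw [← map_mul, sg_mul_ne hne, map_zero]
  rcases p.2.mem_or_mem (this ▸ p.asIdeal.zero_mem) with h | h
  · exact hy h
  · exact hx h

variable (hf : ∃ Y : Finset X, ∀ g h : X → k, (∀ x ∈ Y, g x = h x) → f g = f h)

noncomputable def phi (p : PrimeSpectrum B) : X :=
  (exu f hf.choose hf.choose_spec p).choose

lemma phi_spec (p : PrimeSpectrum B) : f (sg (phi f hf p)) ∉ p.asIdeal :=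
  (exu f hf.choose hf.choose_spec p).choose_spec.1

lemma phi_eq_iff (p : PrimeSpectrum B) (x : X) :
    phi f hf p = x ↔ f (sg x) ∉ p.asIdeal := by
  constructor
  · rintro rfl; exact phi_spec f hf p
  · intro hx
    exact ((exu f hf.choose hf.choose_spec p).choose_spec.2 x hx).symm

lemma phi_preimage (x : X) :
    phi f hf ⁻¹' {x} = (basicOpen (f (sg x)) : Set (PrimeSpectrum B)) := by
  ext p
  simp only [Set.mem_preimage, Set.mem_singleton_iff, SetLike.mem_coe, mem_basicOpen]
  exact phi_eq_iff f hf p x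

lemma phi_continuous : @Continuous _ _ _ ⊥ (phi f hf) := by
  letI : TopologicalSpace X := ⊥
  haveI : DiscreteTopology X := ⟨rfl⟩
  rw [continuous_discrete_rng]
  intro x
  rw [phi_preimage]
  exact (basicOpen _).2

end Forward

section Backward

variable (φ : @ContinuousMap (PrimeSpectrum B) X _ ⊥)

lemma clopen_preim (x : X) : IsClopen (φ ⁻¹' {x}) := by
  letI : TopologicalSpace X := ⊥
  haveI : DiscreteTopology X := ⟨rfl⟩
  exact (isClopen_discrete {x}).preimage φ.continuous

noncomputable def ee (x : X) : B :=
  (exists_idempotent_basicOpen_eq_of_isClopen (clopen_preim φ x)).choose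

lemma ee_idem (x : X) : IsIdempotentElem (ee φ x) :=
  (exists_idempotent_basicOpen_eq_of_isClopen (clopen_preim φ x)).choose_spec.1

lemma ee_basic (x : X) : φ ⁻¹' {x} = (basicOpen (ee φ x) : Set (PrimeSpectrum B)) :=
  (exists_idempotent_basicOpen_eq_of_isClopen (clopen_preim φ x)).choose_spec.2

lemma ee_orth {x y : X} (h : x ≠ y) : ee φ x * ee φ y = 0 := by
  refine idem_nilp_zero ((ee_idem φ x).mul (ee_idem φ y)) ?_
  rw [← basicOpen_eq_bot_iff, basicOpen_mul]
  apply TopologicalSpace.Opens.ext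
  simp only [TopologicalSpace.Opens.coe_inf, TopologicalSpace.Opens.coe_bot]
  rw [← ee_basic, ← ee_basic]
  ext p
  simp only [Set.mem_inter_iff, Set.mem_preimage, Set.mem_singleton_iff, Set.mem_empty_iff_false,
    iff_false, not_and]
  rintro rfl
  exact fun hc => h (hc.symm ▸ rfl)

lemma range_finite : (Set.range φ).Finite := by
  letI : TopologicalSpace X := ⊥
  haveI : DiscreteTopology X := ⟨rfl⟩
  exact (isCompact_range φ.continuous).finite_of_discrete

noncomputable def TT : Finset X := (range_finite φ).toFinset

lemma mem_TT {x : X} : x ∈ TT φ ↔ x ∈ Set.range φ := (range_finite φ).mem_toFinset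

lemma ee_notMem {x : X} (hx : x ∉ TT φ) : ee φ x = 0 := by
  refine idem_nilp_zero (ee_idem φ x) ?_
  rw [← basicOpen_eq_bot_iff]
  apply TopologicalSpace.Opens.ext
  rw [← ee_basic]
  simp only [TopologicalSpace.Opens.coe_bot]
  ext p
  simp only [Set.mem_preimage, Set.mem_singleton_iff, Set.mem_empty_iff_false, iff_false]
  intro h
  exact hx ((mem_TT φ).mpr ⟨p, h⟩)

lemma sum_ee : ∑ x ∈ TT φ, ee φ x = 1 := by
  set s := ∑ x ∈ TT φ, ee φ x with hs
  have hmul : ∀ x ∈ TT φ, s * ee φ x = ee φ x := by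
    intro x hx
    rw [hs, Finset.sum_mul]
    rw [Finset.sum_eq_single x (fun y _ hy => ee_orth φ hy) (fun h => absurd hx h)]
    exact ee_idem φ x
  have hsidem : IsIdempotentElem s := by
    rw [IsIdempotentElem, hs, Finset.mul_sum]
    exact Finset.sum_congr rfl fun x hx => hmul x hx
  have hnil : IsNilpotent (1 - s) := by
    rw [nilpotent_iff_mem_prime]
    intro J hJ
    set p : PrimeSpectrum B := ⟨J, hJ⟩
    have hxT : φ p ∈ TT φ := (mem_TT φ).mpr ⟨p, rfl⟩
    have hnm : ee φ (φ p) ∉ J := by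
      have : p ∈ φ ⁻¹' {φ p} := rfl
      rw [ee_basic] at this
      exact this
    have hz : (1 - s) * ee φ (φ p) = 0 := by
      rw [sub_mul, one_mul, hmul _ hxT, sub_self]
    rcases hJ.mem_or_mem (hz ▸ J.zero_mem) with h | h
    · exact h
    · exact absurd h hnm
  have h0 : (1 : B) - s = 0 := idem_nilp_zero hsidem.one_sub hnil
  rw [sub_eq_zero] at h0
  exact h0.symm

noncomputable def bwd : (X → k) →ₐ[k] B where
  toFun g := ∑ x ∈ TT φ, algebraMap k B (g x) * ee φ x
  map_one' := by
    simp only [Pi.one_apply, map_one, one_mul]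
    exact sum_ee φ
  map_mul' g h := by
    rw [Finset.sum_mul_sum]
    refine (Finset.sum_congr rfl fun x hx => ?_)
    rw [Finset.sum_eq_single x
      (fun y _ hy => by rw [mul_mul_mul_comm, ee_orth φ (fun e => hy e.symm), mul_zero])
      (fun h => absurd hx h)]
    rw [mul_mul_mul_comm, ee_idem φ x, Pi.mul_apply, map_mul]
  map_zero' := by simp
  map_add' g h := by
    simp only [Pi.add_apply, map_add, add_mul, Finset.sum_add_distrib]
  commutes' r := by
    simp only [Pi.algebraMap_apply, Algebra.algebraMap_self_apply]
    rw [← Finset.mul_sum, sum_ee φ, mul_one]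

lemma bwd_factors (g h : X → k) (hgh : ∀ x ∈ TT φ, g x = h x) : bwd φ g = bwd φ h :=
  Finset.sum_congr rfl fun x hx => by rw [hgh x hx]

lemma bwd_sg (x : X) : bwd φ (sg x : X → k) = ee φ x := by
  show (∑ y ∈ TT φ, algebraMap k B ((sg x : X → k) y) * ee φ y) = ee φ x
  have : ∀ y, algebraMap k B ((sg x : X → k) y) * ee φ y
      = if y = x then ee φ y else 0 := by
    intro y
    simp only [sg, Pi.single_apply]
    split <;> simp
  simp only [this]
  rw [Finset.sum_ite_eq' (TT φ) x (fun y => ee φ y)]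
  split
  · rfl
  · exact (ee_notMem φ (by assumption)).symm

end Backward

end AHPAux

/-- Let `k` be a field and `X` a set. The `k`-algebra homomorphisms from the product
algebra `∏_{x ∈ X} k` to a commutative `k`-algebra `B` which factor through the
projection onto a finite subproduct are in bijection with the continuous maps from
`Spec B` (Zariski topology) to `X` (discrete topology). -/
theorem algHom_pi_equiv_continuous_maps (k : Type) [Field k] (X : Type)
    (B : Type) [CommRing B] [Algebra k B] :
    Nonempty
      ({f : ((X → k) →ₐ[k] B) //
          ∃ Y : Finset X, ∀ g h : X → k, (∀ x ∈ Y, g x = h x) → f g = f h} ≃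
        @ContinuousMap (PrimeSpectrum B) X inferInstance ⊥) := by
  classical
  letI : TopologicalSpace X := ⊥
  open AHPAux in
  refine Function.Embedding.antisymm ⟨fun fp => ContinuousMap.mk (phi fp.1 fp.2)
      (phi_continuous fp.1 fp.2), ?_⟩ ⟨fun φ => ⟨bwd φ, ⟨TT φ, bwd_factors φ⟩⟩, ?_⟩
  · rintro ⟨f₁, hf₁⟩ ⟨f₂, hf₂⟩ h
    have hphi : phi f₁ hf₁ = phi f₂ hf₂ := congrArg (fun c : C(PrimeSpectrum B, X) => c.toFun) h
    have hsg : ∀ x, f₁ (sg x) = f₂ (sg x) := by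
      intro x
      refine idem_eq_of_basicOpen_eq ((sg_idem x).map f₁) ((sg_idem x).map f₂) ?_
      rw [← phi_preimage f₁ hf₁, ← phi_preimage f₂ hf₂, hphi]
    refine Subtype.ext ?_
    obtain ⟨Y₁, hY₁⟩ := hf₁
    obtain ⟨Y₂, hY₂⟩ := hf₂
    ext g
    have h1 : f₁ g = ∑ x ∈ Y₁ ∪ Y₂, g x • f₁ (sg x) :=
      f_eq_sum f₁ (Y₁ ∪ Y₂) (fun g h hgh => hY₁ g h fun x hx =>
        hgh x (Finset.mem_union_left _ hx)) g
    have h2 : f₂ g = ∑ x ∈ Y₁ ∪ Y₂, g x • f₂ (sg x) :=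
      f_eq_sum f₂ (Y₁ ∪ Y₂) (fun g h hgh => hY₂ g h fun x hx =>
        hgh x (Finset.mem_union_right _ hx)) g
    rw [h1, h2]
    exact Finset.sum_congr rfl fun x _ => by rw [hsg x]
  · intro φ₁ φ₂ h
    have hb : bwd φ₁ = bwd (k := k) φ₂ := congrArg Subtype.val h
    have hpre : ∀ x : X, φ₁ ⁻¹' {x} = φ₂ ⁻¹' {x} := by
      intro x
      rw [ee_basic φ₁ x, ee_basic φ₂ x, ← bwd_sg (k := k) φ₁ x, ← bwd_sg (k := k) φ₂ x, hb]
    ext p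
    have : p ∈ φ₂ ⁻¹' {φ₁ p} := (hpre (φ₁ p)) ▸ rfl
    exact this.symm
end

section
/- Let k be a field and M a commutative monoid. The monoid algebra k[M] is an integral domain and a finitely generated k-algebra if and only if M is a 'classic' monoid: M is finitely generated, its Grothendieck group G is torsion-free, and the canonical map M → G is injective (i.e., M is cancellative). -/
namespace ClassicAux

variable {M : Type} [CancelCommMonoid M]

theorem exists_mk (y : Localization (⊤ : Submonoid M)) :
    ∃ (a : M) (b : (⊤ : Submonoid M)), y = Localization.mk a b :=
  Localization.ind (fun p => ⟨p.1, p.2, rfl⟩) y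

theorem mk_mul_mk_symm (a b : M) :
    Localization.mk a (⟨b, Submonoid.mem_top _⟩ : (⊤ : Submonoid M)) *
      Localization.mk b (⟨a, Submonoid.mem_top _⟩ : (⊤ : Submonoid M)) = 1 := by
  rw [Localization.mk_mul, ← Localization.mk_one, Localization.mk_eq_mk_iff']
  show (1 : M) * (a * b) = (b * a) * 1
  rw [one_mul, mul_one, mul_comm]

/-- An element of the Grothendieck group (as units of the localization at ⊤). -/
noncomputable def gunit (a b : M) : (Localization (⊤ : Submonoid M))ˣ where
  val := Localization.mk a ⟨b, Submonoid.mem_top _⟩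
  inv := Localization.mk b ⟨a, Submonoid.mem_top _⟩
  val_inv := mk_mul_mk_symm a b
  inv_val := mk_mul_mk_symm b a

@[simp] theorem gunit_val (a b : M) :
    (gunit a b).val = Localization.mk a (⟨b, Submonoid.mem_top _⟩ : (⊤ : Submonoid M)) := rfl

@[simp] theorem gunit_inv (a b : M) :
    (↑(gunit a b)⁻¹ : Localization (⊤ : Submonoid M)) =
      Localization.mk b (⟨a, Submonoid.mem_top _⟩ : (⊤ : Submonoid M)) := rfl

/-- The canonical map from `M` to its Grothendieck group. -/
noncomputable def toG : M →* (Localization (⊤ : Submonoid M))ˣ where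
  toFun a := gunit a 1
  map_one' := by
    ext
    rw [gunit_val, Units.val_one, ← Localization.mk_one]
    rfl
  map_mul' a b := by
    ext
    rw [Units.val_mul, gunit_val, gunit_val, gunit_val, Localization.mk_mul]
    congr 1
    simp

theorem toG_injective : Function.Injective (toG (M := M)) := by
  intro a b h
  have h1 : Localization.mk a (⟨1, Submonoid.mem_top _⟩ : (⊤ : Submonoid M)) =
      Localization.mk b ⟨1, Submonoid.mem_top _⟩ := congrArg Units.val h
  have : (⟨1, Submonoid.mem_top _⟩ : (⊤ : Submonoid M)) = 1 := rfl
  rw [this] at h1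
  exact Localization.mk_left_injective 1 h1

theorem gunit_eq (a : M) (b : (⊤ : Submonoid M)) :
    gunit a (b : M) = toG a * (toG (b : M))⁻¹ := by
  ext
  rw [Units.val_mul]
  show Localization.mk a ⟨(b : M), Submonoid.mem_top _⟩ =
    Localization.mk a ⟨1, Submonoid.mem_top _⟩ * Localization.mk 1 ⟨(b : M), Submonoid.mem_top _⟩
  rw [Localization.mk_mul, Localization.mk_eq_mk_iff']
  show ((1 : M) * (b : M)) * a = (b : M) * (a * 1)
  rw [one_mul, mul_one, mul_comm]

theorem uniqueProds (M : Type) [CancelCommMonoid M] (hfg : Monoid.FG M)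
    (htf : ∀ (a b : M) (n : ℕ), 0 < n → a ^ n = b ^ n → a = b) : UniqueProds M := by
  set G := (Localization (⊤ : Submonoid M))ˣ with hG
  let f : M →* G := toG
  have hf : Function.Injective f := toG_injective
  -- G is a finitely generated group
  have hGfg : Group.FG G := by
    obtain ⟨S, hScl, hSfin⟩ := Monoid.fg_iff.1 hfg
    refine Group.fg_iff.2 ⟨f '' S, ?_, hSfin.image f⟩
    have hsub : ∀ a : M, f a ∈ Subgroup.closure (f '' S) := by
      intro a
      have hle : Submonoid.closure S ≤
          Submonoid.comap f (Subgroup.closure (f '' S)).toSubmonoid := by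
        rw [Submonoid.closure_le]
        intro x hx
        exact Subgroup.subset_closure ⟨x, hx, rfl⟩
      have ha : a ∈ Submonoid.closure S := by rw [hScl]; exact Submonoid.mem_top a
      exact hle ha
    rw [eq_top_iff]
    intro x _
    obtain ⟨a, b, hab⟩ := exists_mk (x.val)
    have hx : x = gunit a (b : M) := by
      ext
      rw [gunit_val, hab]
    rw [hx, gunit_eq]
    exact mul_mem (hsub a) (inv_mem (hsub (b : M)))
  -- G is torsion-free
  have hGtf : ∀ (x : G) (n : ℕ), 0 < n → x ^ n = 1 → x = 1 := by
    intro x n hn hx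
    obtain ⟨a, b, hab⟩ := exists_mk (x.val)
    have hv : x.val ^ n = 1 := by
      rw [← Units.val_pow_eq_pow_val, hx, Units.val_one]
    rw [hab, Localization.mk_pow, ← Localization.mk_one, Localization.mk_eq_mk_iff'] at hv
    have h1 : a ^ n = (b : M) ^ n := by simpa using hv
    have h2 : a = (b : M) := htf a (b : M) n hn h1
    ext
    rw [hab, Units.val_one, ← Localization.mk_one, Localization.mk_eq_mk_iff']
    simp [h2]
  -- transfer to the additive world
  haveI : AddGroup.FG (Additive G) := GroupFG.iff_add_fg.1 hGfg
  haveI : Module.Finite ℤ (Additive G) := Module.Finite.iff_addGroup_fg.2 ‹_›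
  haveI : NoZeroSMulDivisors ℤ (Additive G) := by
    refine @IsAddTorsionFree.to_noZeroSMulDivisors_int _ _ (isAddTorsionFree_iff_not_isOfFinAddOrder.2 ?_)
    intro g hg hfin
    have hfin' : IsOfFinOrder (Additive.toMul g) := by
      rwa [← isOfFinAddOrder_ofMul_iff]
    obtain ⟨n, hn, hpow⟩ := isOfFinOrder_iff_pow_eq_one.1 hfin'
    exact hg (hGtf (Additive.toMul g) n hn hpow)
  haveI : Module.Free ℤ (Additive G) := Module.free_of_finite_type_torsion_free'
  -- embed into a finitely supported function space over ℤ
  let b := Module.Free.chooseBasis ℤ (Additive G)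
  let ι := Module.Free.ChooseBasisIndex ℤ (Additive G)
  haveI : TwoUniqueSums (ι →₀ ℤ) := inferInstance
  let f2 : G →ₙ* Multiplicative (ι →₀ ℤ) :=
    { toFun := fun g => Multiplicative.ofAdd (b.repr (Additive.ofMul g)),
      map_mul' := fun x y => by
        show Multiplicative.ofAdd (b.repr (Additive.ofMul x + Additive.ofMul y)) = _
        rw [map_add]
        rfl }
  have hf2 : Function.Injective f2 := by
    intro x y hxy
    have hr : b.repr (Additive.ofMul x) = b.repr (Additive.ofMul y) := hxy
    exact b.repr.injective hr
  haveI : UniqueProds G := UniqueProds.of_injective_mulHom f2 hf2 inferInstance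
  exact UniqueProds.of_injective_mulHom f.toMulHom hf ‹_›

end ClassicAux

/-- Let `k` be a field and `M` a commutative monoid. The monoid algebra `k[M]` is an
integral domain and a finitely generated `k`-algebra if and only if `M` is a
"classic" monoid: `M` is finitely generated, cancellative (so that the canonical map
to its Grothendieck group `G` is injective), and `G` is torsion-free (which, for a
cancellative commutative monoid, amounts to `a^n = b^n → a = b` for `n > 0`). -/
theorem monoidAlgebra_isDomain_finiteType_iff_classic (k M : Type) [Field k]
    [CommMonoid M] :
    (IsDomain (MonoidAlgebra k M) ∧ Algebra.FiniteType k (MonoidAlgebra k M)) ↔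
      (Monoid.FG M ∧ (∀ a b c : M, a * b = a * c → b = c) ∧
        ∀ (a b : M) (n : ℕ), 0 < n → a ^ n = b ^ n → a = b) := by
  constructor
  · rintro ⟨hdom, hft⟩
    classical
    have hfg : Monoid.FG M := MonoidAlgebra.finiteType_iff_fg.1 hft
    have hsingle_inj : Function.Injective
        (fun a : M => (MonoidAlgebra.single a 1 : MonoidAlgebra k M)) :=
      fun a b h => by
        simpa using (MonoidAlgebra.single_left_injective (one_ne_zero (α := k)) h)
    have hsingle_ne : ∀ a : M, (MonoidAlgebra.single a 1 : MonoidAlgebra k M) ≠ 0 := by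
      intro a h
      exact one_ne_zero (α := k) (MonoidAlgebra.single_eq_zero.1 h)
    have hcancel : ∀ a b c : M, a * b = a * c → b = c := by
      intro a b c h
      have h1 : (MonoidAlgebra.single a 1 : MonoidAlgebra k M) * MonoidAlgebra.single b 1 =
          MonoidAlgebra.single a 1 * MonoidAlgebra.single c 1 := by
        rw [MonoidAlgebra.single_mul_single, MonoidAlgebra.single_mul_single, h]
      exact hsingle_inj (mul_left_cancel₀ (hsingle_ne a) h1)
    refine ⟨hfg, hcancel, ?_⟩
    -- torsion-freeness via strong induction
    have key : ∀ (n : ℕ), ∀ (a b : M), 0 < n → a ^ n = b ^ n → a = b := by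
      intro n
      induction n using Nat.strong_induction_on with
      | _ n ih =>
        intro a b hn hab
        by_cases hex : ∃ i j, i < j ∧ j < n ∧
            a ^ i * b ^ (n - 1 - i) = a ^ j * b ^ (n - 1 - j)
        · obtain ⟨i, j, hij, hjn, he⟩ := hex
          obtain ⟨p, hp, rfl⟩ : ∃ p, 0 < p ∧ j = i + p := ⟨j - i, by omega, by omega⟩
          set q := n - 1 - (i + p) with hq
          have hqp : n - 1 - i = q + p := by omega
          rw [hqp] at he
          have key2 : a ^ i * b ^ q * b ^ p = a ^ i * b ^ q * a ^ p := by
            calc a ^ i * b ^ q * b ^ p = a ^ i * b ^ (q + p) := by rw [pow_add, mul_assoc]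
              _ = a ^ (i + p) * b ^ q := he
              _ = a ^ i * b ^ q * a ^ p := by
                  rw [pow_add, mul_assoc, mul_assoc, mul_comm (a ^ p)]
          have he3 : b ^ p = a ^ p := hcancel _ _ _ key2
          exact ih p (by omega) a b hp he3.symm
        · -- all monomials a^i b^(n-1-i), i < n, are pairwise distinct
          push_neg at hex
          have hd : ∀ i j, i < n → j < n →
              a ^ i * b ^ (n - 1 - i) = a ^ j * b ^ (n - 1 - j) → i = j := by
            intro i j hi hj hij
            rcases lt_trichotomy i j with h | h | h
            · exact absurd hij (hex i j h hj)
            · exact h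
            · exact absurd hij.symm (hex j i h hi)
          set X : MonoidAlgebra k M := MonoidAlgebra.single a 1 with hX
          set Y : MonoidAlgebra k M := MonoidAlgebra.single b 1 with hY
          have hgeom : (∑ i ∈ Finset.range n, X ^ i * Y ^ (n - 1 - i)) * (X - Y) =
              X ^ n - Y ^ n := geom_sum₂_mul X Y n
          have hzero : X ^ n - Y ^ n = 0 := by
            rw [hX, hY, MonoidAlgebra.single_pow, MonoidAlgebra.single_pow, hab, one_pow]
            simp
          rw [hzero] at hgeom
          rcases mul_eq_zero.1 hgeom with hS | hXY
          · -- the geometric sum cannot be zero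
            exfalso
            have hterm : ∀ i, X ^ i * Y ^ (n - 1 - i) =
                MonoidAlgebra.single (a ^ i * b ^ (n - 1 - i)) 1 := by
              intro i
              rw [hX, hY, MonoidAlgebra.single_pow, MonoidAlgebra.single_pow,
                MonoidAlgebra.single_mul_single, one_pow, one_pow, one_mul]
            have happ := congrArg (fun g : MonoidAlgebra k M =>
              g.coeff (a ^ (n - 1) * b ^ (n - 1 - (n - 1)))) hS
            simp only [MonoidAlgebra.coeff_zero, Finsupp.coe_zero, Pi.zero_apply] at happ
            rw [show (∑ i ∈ Finset.range n, X ^ i * Y ^ (n - 1 - i)) =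
                ∑ i ∈ Finset.range n,
                  MonoidAlgebra.single (a ^ i * b ^ (n - 1 - i)) (1 : k) by
              exact Finset.sum_congr rfl fun i _ => hterm i] at happ
            rw [MonoidAlgebra.coeff_sum, Finsupp.finset_sum_apply] at happ
            rw [Finset.sum_eq_single_of_mem (n - 1)
              (Finset.mem_range.2 (by omega)) ?_] at happ
            · simp [MonoidAlgebra.coeff_single, Finsupp.single_apply] at happ
            · intro i hi hine
              rw [Finset.mem_range] at hi
              rw [MonoidAlgebra.coeff_single, Finsupp.single_apply, if_neg]
              intro hc
              exact hine (hd i (n - 1) hi (by omega) hc)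
          · exact hsingle_inj (sub_eq_zero.1 hXY)
    intro a b n hn h
    exact key n a b hn h
  · rintro ⟨hfg, hcancel, htf⟩
    letI : CancelCommMonoid M :=
      { ‹CommMonoid M› with mul_left_cancel := fun a b c h => hcancel a b c h }
    haveI : UniqueProds M := ClassicAux.uniqueProds M hfg htf
    haveI : Monoid.FG M := hfg
    refine ⟨?_, inferInstance⟩
    exact NoZeroDivisors.to_isDomain _
end

section
/- The category of diagonalizable affine algebraic groups over a field k is anti-equivalent to the category of finitely generated abelian groups, via M ↦ Spec k[M] (where k[M] is the group Hopf algebra) and G ↦ the group of characters Hom(G, G_m); in particular Hom-sets correspond: group scheme homomorphisms Spec k[M] → Spec k[N] are in natural bijection with group homomorphisms N → M. -/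
open TensorProduct

set_option maxHeartbeats 1000000
set_option synthInstance.maxHeartbeats 200000

/-- The comultiplication of the group Hopf algebra `k[M]`, making the elements of `M`
group-like: `m ↦ m ⊗ m`. -/
noncomputable def groupAlgComul (k M : Type) [CommRing k] [CommMonoid M] :
    MonoidAlgebra k M →ₐ[k] (MonoidAlgebra k M ⊗[k] MonoidAlgebra k M) :=
  MonoidAlgebra.lift k _ M
    { toFun := fun m => (MonoidAlgebra.of k M m) ⊗ₜ[k] (MonoidAlgebra.of k M m)
      map_one' := by
        show (MonoidAlgebra.of k M) 1 ⊗ₜ[k] (MonoidAlgebra.of k M) 1 = 1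
        rw [map_one, Algebra.TensorProduct.one_def]
      map_mul' := by
        intro a b
        rw [Algebra.TensorProduct.tmul_mul_tmul, ← map_mul] }

/-- The counit of the group Hopf algebra `k[M]`: the algebra map `m ↦ 1`. -/
noncomputable def groupAlgCounit (k M : Type) [CommRing k] [CommMonoid M] :
    MonoidAlgebra k M →ₐ[k] k :=
  MonoidAlgebra.lift k k M (1 : M →* k)

lemma groupAlgComul_of (k M : Type) [CommRing k] [CommMonoid M] (m : M) :
    groupAlgComul k M (MonoidAlgebra.of k M m) =
      (MonoidAlgebra.of k M m) ⊗ₜ[k] (MonoidAlgebra.of k M m) := by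
  simp [groupAlgComul, MonoidAlgebra.lift_of]

lemma groupAlgCounit_of (k M : Type) [CommRing k] [CommMonoid M] (m : M) :
    groupAlgCounit k M (MonoidAlgebra.of k M m) = 1 := by
  simp [groupAlgCounit, MonoidAlgebra.lift_of]

/-- Group-like elements of the group algebra are exactly the elements of the group. -/
lemma grouplike_eq_of {k M : Type} [Field k] [CommMonoid M] (x : MonoidAlgebra k M)
    (hx : x ≠ 0) (h : groupAlgComul k M x = x ⊗ₜ[k] x) :
    ∃ m : M, x = MonoidAlgebra.of k M m := by
  classical
  let T : (MonoidAlgebra k M ⊗[k] MonoidAlgebra k M) →ₗ[k] (M × M →₀ k) :=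
    (finsuppTensorFinsupp' k M M).toLinearMap ∘ₗ
      TensorProduct.map (MonoidAlgebra.coeffLinearEquiv k).toLinearMap
        (MonoidAlgebra.coeffLinearEquiv k).toLinearMap
  have hcomul : groupAlgComul k M x =
      x.coeff.sum fun m c => c • ((MonoidAlgebra.of k M m) ⊗ₜ[k] (MonoidAlgebra.of k M m)) := by
    conv_lhs => rw [← MonoidAlgebra.ofCoeff_coeff x, ← Finsupp.sum_single x.coeff,
      MonoidAlgebra.ofCoeff_finsuppSum]
    rw [map_finsuppSum (groupAlgComul k M)]
    refine Finsupp.sum_congr fun m _ => ?_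
    have : (MonoidAlgebra.ofCoeff (Finsupp.single m (x.coeff m)) : MonoidAlgebra k M)
        = (x.coeff m) • MonoidAlgebra.of k M m := by
      ext; simp [MonoidAlgebra.of_apply, MonoidAlgebra.smul_single', MonoidAlgebra.coeff_single]
    rw [this, map_smul, groupAlgComul_of]
  have himg : T (groupAlgComul k M x)
      = x.coeff.sum fun m c => Finsupp.single (m, m) c := by
    rw [hcomul, map_finsuppSum]
    refine Finsupp.sum_congr fun m _ => ?_
    rw [map_smul]
    simp [T, MonoidAlgebra.of_apply, MonoidAlgebra.coeffLinearEquiv, MonoidAlgebra.coeff_single,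
      finsuppTensorFinsupp'_single_tmul_single]
  have key : ∀ a b : M, (T (groupAlgComul k M x)) (a, b)
      = x.coeff a * x.coeff b := by
    intro a b
    rw [h]
    exact finsuppTensorFinsupp'_apply_apply k M M x.coeff x.coeff a b
  have key2 : ∀ a b : M, a ≠ b → x.coeff a * x.coeff b = 0 := by
    intro a b hab
    rw [← key, himg, Finsupp.sum_apply, Finsupp.sum]
    refine Finset.sum_eq_zero fun m _ => ?_
    refine Finsupp.single_eq_of_ne ?_
    intro hmm
    exact hab ((congrArg Prod.fst hmm).trans (congrArg Prod.snd hmm).symm)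
  obtain ⟨a, ha⟩ := Finsupp.support_nonempty_iff.2 (MonoidAlgebra.coeff_eq_zero.not.2 hx)
  have hxa : x.coeff a ≠ 0 := Finsupp.mem_support_iff.1 ha
  have hsupp : ∀ b ∈ x.coeff.support, b = a := by
    intro b hb
    by_contra hba
    have := key2 a b (fun e => hba e.symm)
    rcases mul_eq_zero.1 this with h' | h'
    · exact hxa h'
    · exact Finsupp.mem_support_iff.1 hb h'
  have hsuppeq : x.coeff.support = {a} := Finset.eq_singleton_iff_unique_mem.2 ⟨ha, hsupp⟩
  have hdiag : (T (groupAlgComul k M x)) (a, a) = x.coeff a := by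
    rw [himg, Finsupp.sum_apply, Finsupp.sum, hsuppeq, Finset.sum_singleton,
      Finsupp.single_eq_same]
  have hxa1 : x.coeff a = 1 := by
    have h2 : x.coeff a * x.coeff a = x.coeff a := (key a a).symm.trans hdiag
    have := mul_right_cancel₀ hxa (h2.trans (one_mul (x.coeff a)).symm)
    exact this
  refine ⟨a, ?_⟩
  ext b
  by_cases hb : b = a
  · subst hb; simp [MonoidAlgebra.of_apply, MonoidAlgebra.coeff_single, hxa1]
  · have hxb : x.coeff b = 0 := by
      by_contra h'
      exact hb (hsupp b (Finsupp.mem_support_iff.2 h'))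
    rw [hxb, MonoidAlgebra.of_apply, MonoidAlgebra.coeff_single]
    exact (Finsupp.single_eq_of_ne hb).symm

/-- Anti-equivalence between diagonalizable groups and finitely generated abelian
groups, on Hom-sets: for a field `k` and finitely generated abelian groups `M, N`,
group scheme homomorphisms `Spec k[M] → Spec k[N]`, i.e. Hopf algebra homomorphisms
`k[N] → k[M]`, are in natural bijection with group homomorphisms `N → M` (the
bijection matching `f` with the group homomorphism it induces on the group-like
elements). -/
theorem diagonalizable_antiequivalence (k M N : Type) [Field k]
    [CommGroup M] [Group.FG M] [CommGroup N] [Group.FG N] :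
    ∃ e : {f : MonoidAlgebra k N →ₐ[k] MonoidAlgebra k M //
        (∀ a : MonoidAlgebra k N,
          groupAlgComul k M (f a) = (Algebra.TensorProduct.map f f) (groupAlgComul k N a)) ∧
        ∀ a : MonoidAlgebra k N, groupAlgCounit k M (f a) = groupAlgCounit k N a} ≃
      (N →* M),
      ∀ (f : {f : MonoidAlgebra k N →ₐ[k] MonoidAlgebra k M //
          (∀ a : MonoidAlgebra k N,
            groupAlgComul k M (f a) = (Algebra.TensorProduct.map f f) (groupAlgComul k N a)) ∧
          ∀ a : MonoidAlgebra k N, groupAlgCounit k M (f a) = groupAlgCounit k N a})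
        (n : N),
        f.1 (MonoidAlgebra.of k N n) = MonoidAlgebra.of k M (e f n) := by
  classical
  -- every Hopf map sends group-likes to group-likes
  have hglike : ∀ (f : MonoidAlgebra k N →ₐ[k] MonoidAlgebra k M),
      (∀ a, groupAlgComul k M (f a) = (Algebra.TensorProduct.map f f) (groupAlgComul k N a)) →
      (∀ a, groupAlgCounit k M (f a) = groupAlgCounit k N a) →
      ∀ n : N, ∃ m : M, f (MonoidAlgebra.of k N n) = MonoidAlgebra.of k M m := by
    intro f hcomul hcounit n
    apply grouplike_eq_of
    · intro h0
      have := hcounit (MonoidAlgebra.of k N n)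
      rw [h0, map_zero, groupAlgCounit_of] at this
      exact zero_ne_one this
    · rw [hcomul, groupAlgComul_of, Algebra.TensorProduct.map_tmul]
  have of_inj : Function.Injective (MonoidAlgebra.of k M) := MonoidAlgebra.of_injective
  -- forward map
  let φ : {f : MonoidAlgebra k N →ₐ[k] MonoidAlgebra k M //
        (∀ a, groupAlgComul k M (f a) = (Algebra.TensorProduct.map f f) (groupAlgComul k N a)) ∧
        ∀ a, groupAlgCounit k M (f a) = groupAlgCounit k N a} → (N →* M) := fun f =>
    { toFun := fun n => Classical.choose (hglike f.1 f.2.1 f.2.2 n)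
      map_one' := by
        apply of_inj
        rw [← Classical.choose_spec (hglike f.1 f.2.1 f.2.2 1)]
        rw [map_one (MonoidAlgebra.of k N), map_one (MonoidAlgebra.of k M), map_one f.1]
      map_mul' := by
        intro a b
        apply of_inj
        rw [← Classical.choose_spec (hglike f.1 f.2.1 f.2.2 (a * b)), map_mul, map_mul,
          map_mul]
        exact congrArg₂ (· * ·) (Classical.choose_spec (hglike f.1 f.2.1 f.2.2 a))
          (Classical.choose_spec (hglike f.1 f.2.1 f.2.2 b)) }
  have hφ : ∀ f n, f.1 (MonoidAlgebra.of k N n) = MonoidAlgebra.of k M (φ f n) :=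
    fun f n => Classical.choose_spec (hglike f.1 f.2.1 f.2.2 n)
  -- inverse map
  let ψ0 : (N →* M) → (MonoidAlgebra k N →ₐ[k] MonoidAlgebra k M) := fun g =>
    MonoidAlgebra.lift k _ N ((MonoidAlgebra.of k M).comp g)
  have hψ0 : ∀ g n, ψ0 g (MonoidAlgebra.of k N n) = MonoidAlgebra.of k M (g n) := by
    intro g n
    simp [ψ0, MonoidAlgebra.lift_of]
  let ψ : (N →* M) → {f : MonoidAlgebra k N →ₐ[k] MonoidAlgebra k M //
        (∀ a, groupAlgComul k M (f a) = (Algebra.TensorProduct.map f f) (groupAlgComul k N a)) ∧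
        ∀ a, groupAlgCounit k M (f a) = groupAlgCounit k N a} := fun g =>
    ⟨ψ0 g, by
      constructor
      · intro a
        have : (groupAlgComul k M).comp (ψ0 g)
            = (Algebra.TensorProduct.map (ψ0 g) (ψ0 g)).comp (groupAlgComul k N) := by
          apply MonoidAlgebra.algHom_ext ?_ (Subsingleton.elim _ _)
          intro n
          show groupAlgComul k M (ψ0 g (MonoidAlgebra.of k N n))
            = Algebra.TensorProduct.map (ψ0 g) (ψ0 g) (groupAlgComul k N (MonoidAlgebra.of k N n))
          rw [hψ0, groupAlgComul_of, groupAlgComul_of, Algebra.TensorProduct.map_tmul, hψ0]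
        exact DFunLike.congr_fun this a
      · intro a
        have : (groupAlgCounit k M).comp (ψ0 g) = groupAlgCounit k N := by
          apply MonoidAlgebra.algHom_ext ?_ (Subsingleton.elim _ _)
          intro n
          show groupAlgCounit k M (ψ0 g (MonoidAlgebra.of k N n))
            = groupAlgCounit k N (MonoidAlgebra.of k N n)
          rw [hψ0, groupAlgCounit_of, groupAlgCounit_of]
        exact DFunLike.congr_fun this a⟩
  refine ⟨⟨φ, ψ, ?_, ?_⟩, hφ⟩
  · intro f
    apply Subtype.ext
    apply MonoidAlgebra.algHom_ext ?_ (Subsingleton.elim _ _)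
    intro n
    show ψ0 (φ f) (MonoidAlgebra.of k N n) = f.1 (MonoidAlgebra.of k N n)
    rw [hψ0, hφ]
  · intro g
    ext n
    apply of_inj
    show MonoidAlgebra.of k M (φ (ψ g) n) = MonoidAlgebra.of k M (g n)
    rw [← hφ (ψ g) n]
    exact hψ0 g n
end
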